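/- Let J ⊆ ℝ be an interval and f, g : J → ℝ be continuous synchronous functions. Then for all bounded self-adjoint operators A, B on a complex Hilbert space ℋ with spectra contained in J and all unit vectors x, y ∈ ℋ, ⟨f(A)g(A)x, x⟩ + ⟨f(B)g(B)y, y⟩ ≥ ⟨f(A)x, x⟩⟨g(B)y, y⟩ + ⟨f(B)y, y⟩⟨g(A)x, x⟩ (all inner products here are real numbers). -/

import Mathlib

private lemma cfc_inner_re_nonneg {H : Type*} [NormedAddCommGroup H] [InnerProductSpace ℂ H]
    [CompleteSpace H] (A : H →L[ℂ] H) (φ : ℝ → ℝ)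
    (hφ : ∀ t ∈ spectrum ℝ A, 0 ≤ φ t) (z : H) :
    0 ≤ (inner ℂ ((cfc φ A) z) z : ℂ).re := by
  have h : (0 : H →L[ℂ] H) ≤ cfc φ A := cfc_nonneg hφ
  exact (RCLike.nonneg_iff.mp (((ContinuousLinearMap.nonneg_iff_isPositive _).mp h).inner_nonneg_left z)).1

private lemma re_inner_smul {H : Type*} [NormedAddCommGroup H] [InnerProductSpace ℂ H]
    (r : ℝ) (v z : H) : (inner ℂ ((r : ℝ) • v) z : ℂ).re = r * (inner ℂ v z : ℂ).re := by
  rw [show ((r : ℝ) • v) = ((r : ℂ) • v) by simp [Complex.coe_smul], inner_smul_left]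
  simp

/-- Chebyshev inequality for vector states and synchronous functions of bounded
self-adjoint operators on a Hilbert space:
`⟨f(A)g(A)x, x⟩ + ⟨f(B)g(B)y, y⟩ ≥ ⟨f(A)x, x⟩⟨g(B)y, y⟩ + ⟨f(B)y, y⟩⟨g(A)x, x⟩`. -/
theorem chebyshev_inner_sync {H : Type*} [NormedAddCommGroup H] [InnerProductSpace ℂ H]
    [CompleteSpace H] (J : Set ℝ) (hJ : J.OrdConnected) (f g : ℝ → ℝ)
    (hfc : ContinuousOn f J) (hgc : ContinuousOn g J)
    (hsync : ∀ s ∈ J, ∀ t ∈ J, 0 ≤ (f t - f s) * (g t - g s))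
    (A B : H →L[ℂ] H) (hA : IsSelfAdjoint A) (hB : IsSelfAdjoint B)
    (hAJ : spectrum ℝ A ⊆ J) (hBJ : spectrum ℝ B ⊆ J)
    (x y : H) (hx : ‖x‖ = 1) (hy : ‖y‖ = 1) :
    (inner ℂ ((cfc f A * cfc g A) x) x : ℂ).re + (inner ℂ ((cfc f B * cfc g B) y) y : ℂ).re ≥
      (inner ℂ (cfc f A x) x : ℂ).re * (inner ℂ (cfc g B y) y : ℂ).re +
      (inner ℂ (cfc f B y) y : ℂ).re * (inner ℂ (cfc g A x) x : ℂ).re := by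
  have hfcA : ContinuousOn f (spectrum ℝ A) := hfc.mono hAJ
  have hgcA : ContinuousOn g (spectrum ℝ A) := hgc.mono hAJ
  have hfcB : ContinuousOn f (spectrum ℝ B) := hfc.mono hBJ
  have hgcB : ContinuousOn g (spectrum ℝ B) := hgc.mono hBJ
  set a := (inner ℂ (cfc f A x) x : ℂ).re with ha
  set b := (inner ℂ (cfc g A x) x : ℂ).re with hb
  set p := (inner ℂ ((cfc f A * cfc g A) x) x : ℂ).re with hp
  have hxx : (inner ℂ x x : ℂ).re = 1 := by
    simpa [hx] using inner_self_eq_norm_sq (𝕜 := ℂ) x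
  have hyy : (inner ℂ y y : ℂ).re = 1 := by
    simpa [hy] using inner_self_eq_norm_sq (𝕜 := ℂ) y
  have key1 : ∀ t ∈ J, 0 ≤ p + f t * g t - g t * a - f t * b := by
    intro t ht
    have hnn : ∀ s ∈ spectrum ℝ A, 0 ≤ (f s - f t) * (g s - g t) := fun s hs =>
      hsync t ht s (hAJ hs)
    have h0 := cfc_inner_re_nonneg A _ hnn x
    have c1 : ContinuousOn (fun s => f s * g s - g t * f s) (spectrum ℝ A) :=
      (hfcA.mul hgcA).sub (continuousOn_const.mul hfcA)
    have c2 : ContinuousOn (fun s => f t * g s) (spectrum ℝ A) :=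
      continuousOn_const.mul hgcA
    have hexp : cfc (fun s => (f s - f t) * (g s - g t)) A =
        cfc f A * cfc g A - (g t) • cfc f A - (f t) • cfc g A +
          algebraMap ℝ (H →L[ℂ] H) (f t * g t) := by
      have heq : (fun s => (f s - f t) * (g s - g t)) =
          fun s => (f s * g s - g t * f s - f t * g s) + f t * g t := by
        ext s; ring
      rw [heq, cfc_add_const (f t * g t) (fun s => f s * g s - g t * f s - f t * g s) A (c1.sub c2) hA,
        cfc_sub (fun s => f s * g s - g t * f s) (fun s => f t * g s) A c1 c2,
        cfc_sub (fun s => f s * g s) (fun s => g t * f s) A (hfcA.mul hgcA)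
          (continuousOn_const.mul hfcA),
        cfc_mul f g A hfcA hgcA, cfc_const_mul (g t) f A hfcA, cfc_const_mul (f t) g A hgcA]
    rw [hexp] at h0
    simp only [ContinuousLinearMap.add_apply, ContinuousLinearMap.sub_apply,
      ContinuousLinearMap.smul_apply, inner_add_left, inner_sub_left] at h0
    have halg : (algebraMap ℝ (H →L[ℂ] H) (f t * g t)) x = (f t * g t) • x := by
      rw [Algebra.algebraMap_eq_smul_one]; simp
    rw [halg] at h0
    simp only [Complex.sub_re, Complex.add_re] at h0
    rw [re_inner_smul, re_inner_smul, re_inner_smul, hxx] at h0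
    linarith
  -- now apply to B
  set c := (inner ℂ (cfc f B y) y : ℂ).re with hc
  set d := (inner ℂ (cfc g B y) y : ℂ).re with hd
  set q := (inner ℂ ((cfc f B * cfc g B) y) y : ℂ).re with hq
  have hnnB : ∀ t ∈ spectrum ℝ B, 0 ≤ (fun t => (f t * g t - a * g t - b * f t) + p) t :=
    fun t ht => by have := key1 t (hBJ ht); simp only; linarith
  have h0 := cfc_inner_re_nonneg B _ hnnB y
  have c1 : ContinuousOn (fun t => f t * g t - a * g t) (spectrum ℝ B) :=
    (hfcB.mul hgcB).sub (continuousOn_const.mul hgcB)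
  have c2 : ContinuousOn (fun t => b * f t) (spectrum ℝ B) :=
    continuousOn_const.mul hfcB
  have hexp : cfc (fun t => (f t * g t - a * g t - b * f t) + p) B =
      cfc f B * cfc g B - a • cfc g B - b • cfc f B + algebraMap ℝ (H →L[ℂ] H) p := by
    rw [cfc_add_const p (fun t => f t * g t - a * g t - b * f t) B (c1.sub c2) hB,
      cfc_sub (fun t => f t * g t - a * g t) (fun t => b * f t) B c1 c2,
      cfc_sub (fun t => f t * g t) (fun t => a * g t) B (hfcB.mul hgcB)
        (continuousOn_const.mul hgcB),
      cfc_mul f g B hfcB hgcB, cfc_const_mul a g B hgcB, cfc_const_mul b f B hfcB]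
  rw [hexp] at h0
  simp only [ContinuousLinearMap.add_apply, ContinuousLinearMap.sub_apply,
    ContinuousLinearMap.smul_apply, inner_add_left, inner_sub_left] at h0
  have halg : (algebraMap ℝ (H →L[ℂ] H) p) y = p • y := by
    rw [Algebra.algebraMap_eq_smul_one]; simp
  rw [halg] at h0
  simp only [Complex.sub_re, Complex.add_re] at h0
  rw [re_inner_smul, re_inner_smul, re_inner_smul, hyy] at h0
  linarith
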